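/- Consider the planar system q̇ = p, ṗ = -∂U_W/∂q(q) where U_W(q) = g·cos q - (1/2)(1 + cos² q)·w² with constants g > 0 and w² > g. Then U_W has a strict local minimum at q = 0, and consequently H(q,p) = p²/2 + U_W(q) - U_W(0) is a Lyapunov function establishing that (q,p) = (0,0) is a stable equilibrium of this system. -/

import Mathlib

open Real

/-- Factorization of the potential difference. -/
lemma UW_key (g w : ℝ) (UW : ℝ → ℝ)
    (hUW : ∀ q, UW q = g * Real.cos q - (1/2) * (1 + Real.cos q ^ 2) * w^2) (x : ℝ) :
    UW x - UW 0 = (1 - Real.cos x) * ((1/2) * (1 + Real.cos x) * w^2 - g) := by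
  rw [hUW x, hUW 0, Real.cos_zero]; ring

/-- Vibrational stabilization of the inverted pendulum: the effective potential
`U_W(q) = g cos q - ½(1 + cos²q) w²` with `w² > g > 0` has a strict local
minimum at `q = 0`, and the origin is a stable equilibrium of the system
`q̇ = p`, `ṗ = -U_W'(q)`. -/
theorem inverted_pendulum_stable (g w : ℝ) (hg : 0 < g) (hw : g < w^2)
    (UW : ℝ → ℝ)
    (hUW : ∀ q, UW q = g * Real.cos q - (1/2) * (1 + Real.cos q ^ 2) * w^2) :
    (∃ δ > 0, ∀ q : ℝ, q ≠ 0 → |q| < δ → UW 0 < UW q) ∧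
    (∀ ε > 0, ∃ δ > 0, ∀ q p : ℝ → ℝ,
      (∀ t, HasDerivAt q (p t) t) →
      (∀ t, HasDerivAt p (-(deriv UW (q t))) t) →
      |q 0| ≤ δ → |p 0| ≤ δ → ∀ t ≥ 0, |q t| ≤ ε ∧ |p t| ≤ ε) := by
  have hw0 : (0:ℝ) < w^2 := hg.trans hw
  have hpi := Real.pi_gt_three
  obtain ⟨c, hc⟩ : ∃ c : ℝ, c = 1 - g / w^2 := ⟨_, rfl⟩
  have hc0 : 0 < c := by
    have : g / w^2 < 1 := (div_lt_one hw0).2 hw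
    rw [hc]; linarith
  have hc1 : c ≤ 1 := by
    have : 0 < g / w^2 := div_pos hg hw0
    rw [hc]; linarith
  obtain ⟨r0, hr0def⟩ : ∃ r0 : ℝ, r0 = Real.sqrt (2 * c) := ⟨_, rfl⟩
  have hr00 : 0 < r0 := hr0def ▸ Real.sqrt_pos.2 (by linarith)
  have hr0le : r0 ≤ 2 := by
    rw [hr0def]
    calc Real.sqrt (2 * c) ≤ Real.sqrt 4 := Real.sqrt_le_sqrt (by linarith)
    _ = 2 := by
        rw [show (4:ℝ) = 2^2 by norm_num]
        exact Real.sqrt_sq (by norm_num)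
  -- cos x < 1 for 0 < |x| ≤ 2
  have hcoslt : ∀ x : ℝ, x ≠ 0 → |x| ≤ 2 → Real.cos x < 1 := by
    intro x hx hx2
    rcases abs_le.1 hx2 with ⟨h1, h2⟩
    refine lt_of_le_of_ne (Real.cos_le_one x) fun h => hx ?_
    exact (Real.cos_eq_one_iff_of_lt_of_lt (by linarith) (by linarith)).1 h
  -- factor bound on |x| ≤ r0
  have hfac : ∀ x : ℝ, |x| ≤ r0 → (w^2 - g)/2 ≤ (1/2) * (1 + Real.cos x) * w^2 - g := by
    intro x hx
    have hx2 : x^2 ≤ 2 * c := by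
      have hss := Real.sq_sqrt (show (0:ℝ) ≤ 2*c by linarith)
      calc x^2 = |x|^2 := (sq_abs x).symm
      _ ≤ r0^2 := by gcongr
      _ = 2*c := by rw [hr0def, hss]
    have hcos : g / w^2 ≤ Real.cos x := by
      have := Real.one_sub_sq_div_two_le_cos (x := x)
      rw [hc] at hx2; linarith
    have : g ≤ Real.cos x * w^2 := by
      calc g = g / w^2 * w^2 := (div_mul_cancel₀ g hw0.ne').symm
      _ ≤ Real.cos x * w^2 := by gcongr
    nlinarith
  have hfacub : ∀ x : ℝ, (1/2) * (1 + Real.cos x) * w^2 - g ≤ w^2 := by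
    intro x
    have := Real.cos_le_one x
    nlinarith
  constructor
  · -- strict local minimum
    refine ⟨r0, hr00, fun x hx hxr => ?_⟩
    have h1 : 0 < 1 - Real.cos x := by
      have := hcoslt x hx (le_trans hxr.le hr0le)
      linarith
    have h2 : 0 < (1/2) * (1 + Real.cos x) * w^2 - g := by
      have := hfac x hxr.le; linarith
    have := UW_key g w UW hUW x
    nlinarith
  · -- stability
    intro ε hε
    obtain ⟨r, hrdef⟩ : ∃ r : ℝ, r = min ε r0 := ⟨_, rfl⟩
    have hr0' : 0 < r := hrdef ▸ lt_min hε hr00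
    have hrε : r ≤ ε := hrdef ▸ min_le_left _ _
    have hrr0 : r ≤ r0 := hrdef ▸ min_le_right _ _
    have hcosr : Real.cos r < 1 := hcoslt r (ne_of_gt hr0') (by rw [abs_of_pos hr0']; linarith)
    obtain ⟨m, hmdef⟩ : ∃ m : ℝ, m = min ((1 - Real.cos r) * ((w^2 - g)/2)) (ε^2/2) := ⟨_, rfl⟩
    have hm0 : 0 < m := hmdef ▸ lt_min (mul_pos (by linarith) (by linarith)) (by positivity)
    have hm1 : m ≤ (1 - Real.cos r) * ((w^2 - g)/2) := hmdef ▸ min_le_left _ _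
    have hmε : m ≤ ε^2/2 := hmdef ▸ min_le_right _ _
    obtain ⟨δ, hδdef⟩ : ∃ δ : ℝ, δ = min r (Real.sqrt (m / (1 + w^2))) := ⟨_, rfl⟩
    have hδ0 : 0 < δ := hδdef ▸ lt_min hr0' (Real.sqrt_pos.2 (by positivity))
    refine ⟨δ, hδ0, fun q p hq hp hq0 hp0 => ?_⟩
    have hδr : δ ≤ r := hδdef ▸ min_le_left _ _
    have hδsq : δ^2 ≤ m / (1 + w^2) := by
      have h1 : δ ≤ Real.sqrt (m / (1 + w^2)) := hδdef ▸ min_le_right _ _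
      have hss := Real.sq_sqrt (show (0:ℝ) ≤ m / (1 + w^2) by positivity)
      calc δ^2 ≤ Real.sqrt (m / (1 + w^2))^2 := by gcongr
      _ = m / (1 + w^2) := hss
    -- derivative of UW
    have hderiv : ∀ x : ℝ, HasDerivAt UW ((-g + w^2 * Real.cos x) * Real.sin x) x := by
      intro x
      rw [funext hUW]
      have h1 := ((Real.hasDerivAt_cos x).const_mul g).sub
        (((((Real.hasDerivAt_cos x).pow 2).const_add 1).const_mul (1/2)).mul_const (w^2))
      refine h1.congr_deriv ?_
      ring
    have hderivUW : ∀ x : ℝ, deriv UW x = (-g + w^2 * Real.cos x) * Real.sin x :=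
      fun x => (hderiv x).deriv
    -- energy conservation
    have hE' : ∀ t, HasDerivAt (fun s => (p s)^2 / 2 + UW (q s)) 0 t := by
      intro t
      have h1 : HasDerivAt (fun s => (p s)^2 / 2)
          (2 * p t ^ 1 * (-(deriv UW (q t))) / 2) t := ((hp t).pow 2).div_const 2
      have h2 : HasDerivAt (fun s => UW (q s))
          ((-g + w^2 * Real.cos (q t)) * Real.sin (q t) * p t) t :=
        (hderiv (q t)).comp t (hq t)
      have h3 := h1.add h2
      refine h3.congr_deriv ?_
      rw [hderivUW]
      ring
    have hEconst : ∀ t, (p t)^2 / 2 + UW (q t) = (p 0)^2 / 2 + UW (q 0) := fun t =>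
      is_const_of_deriv_eq_zero (fun s => (hE' s).differentiableAt)
        (fun s => (hE' s).deriv) t 0
    obtain ⟨H0, hH0def⟩ : ∃ H0 : ℝ, H0 = (p 0)^2 / 2 + (UW (q 0) - UW 0) := ⟨_, rfl⟩
    have hEt : ∀ t, (p t)^2 / 2 + (UW (q t) - UW 0) = H0 := by
      intro t
      have := hEconst t
      rw [hH0def]; linarith
    -- H0 < m
    have hH0m : H0 < m := by
      have h1 : (p 0)^2 / 2 ≤ δ^2 / 2 := by
        have : (p 0)^2 ≤ δ^2 := by
          calc (p 0)^2 = |p 0|^2 := (sq_abs _).symm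
          _ ≤ δ^2 := by gcongr
        linarith
      have h2 : UW (q 0) - UW 0 ≤ δ^2 / 2 * w^2 := by
        rw [UW_key g w UW hUW]
        have hc1' : 0 ≤ 1 - Real.cos (q 0) := by have := Real.cos_le_one (q 0); linarith
        have hc2 : 1 - Real.cos (q 0) ≤ (q 0)^2 / 2 := by
          have := Real.one_sub_sq_div_two_le_cos (x := q 0); linarith
        have hq0sq : (q 0)^2 ≤ δ^2 := by
          calc (q 0)^2 = |q 0|^2 := (sq_abs _).symm
          _ ≤ δ^2 := by gcongr
        calc (1 - Real.cos (q 0)) * ((1/2) * (1 + Real.cos (q 0)) * w^2 - g)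
            ≤ (1 - Real.cos (q 0)) * w^2 :=
              mul_le_mul_of_nonneg_left (hfacub (q 0)) hc1'
          _ ≤ (q 0)^2 / 2 * w^2 := by gcongr
          _ ≤ δ^2 / 2 * w^2 := by gcongr
      have hH0le : H0 ≤ δ^2 / 2 * (1 + w^2) := by
        rw [hH0def]; nlinarith
      have h4 : δ^2 * (1 + w^2) ≤ m := by
        calc δ^2 * (1 + w^2) ≤ m / (1 + w^2) * (1 + w^2) := by gcongr
        _ = m := by field_simp
      linarith
    -- nonnegativity of the potential near 0
    have hqcont : Continuous q := continuous_iff_continuousAt.2 fun s => (hq s).continuousAt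
    have hV0 : ∀ x : ℝ, |x| ≤ r0 → 0 ≤ UW x - UW 0 := by
      intro x hx
      rw [UW_key g w UW hUW]
      have h1 : 0 ≤ 1 - Real.cos x := by have := Real.cos_le_one x; linarith
      have h2 := hfac x hx
      exact mul_nonneg h1 (le_trans (by linarith : (0:ℝ) ≤ (w^2 - g)/2) h2)
    -- main claim: |q t| < r for all t ≥ 0
    have hmain : ∀ t ≥ 0, |q t| < r := by
      intro t ht
      by_contra hcon
      push_neg at hcon
      have hivt := intermediate_value_Icc ht (hqcont.abs.continuousOn (s := Set.Icc 0 t))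
      have hrmem : r ∈ Set.Icc (|q 0|) (|q t|) := ⟨le_trans hq0 hδr, hcon⟩
      obtain ⟨ts, _, hts'⟩ := hivt hrmem
      have hts : |q ts| = r := hts'
      have hcosts : Real.cos (q ts) = Real.cos r := by
        rw [← Real.cos_abs, hts]
      have hVts : m ≤ UW (q ts) - UW 0 := by
        rw [UW_key g w UW hUW, hcosts]
        have h2 := hfac (q ts) (by rw [hts]; exact hrr0)
        rw [hcosts] at h2
        calc m ≤ (1 - Real.cos r) * ((w^2 - g)/2) := hm1
        _ ≤ (1 - Real.cos r) * ((1/2) * (1 + Real.cos r) * w^2 - g) :=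
            mul_le_mul_of_nonneg_left h2 (by linarith)
      have hle : UW (q ts) - UW 0 ≤ H0 := by
        have h5 := hEt ts
        have h6 := sq_nonneg (p ts)
        linarith
      linarith
    intro t ht
    have hqt : |q t| < r := hmain t ht
    refine ⟨le_trans hqt.le hrε, ?_⟩
    have hVqt : 0 ≤ UW (q t) - UW 0 := hV0 (q t) (le_trans hqt.le hrr0)
    have hpt : (p t)^2 / 2 ≤ H0 := by have := hEt t; linarith
    have : (p t)^2 ≤ ε^2 := by linarith
    exact abs_le_of_sq_le_sq this hε.le
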